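/- For every real q ≥ 1, one has Φ(q) ≥ 1, where Φ(q) = √((1 + √(2/q))/(1 + √(2q))) · q · (1 + 1/q)^{1−q}. -/

import Mathlib

open Real Set

/-- Padé-type upper bound for the logarithm. -/
lemma log_pade {x : ℝ} (hx : 0 ≤ x) : Real.log (1 + x) ≤ x * (6 + x) / (6 + 4 * x) := by
  have key : ∀ y : ℝ, 0 ≤ y →
      HasDerivAt (fun y : ℝ => y * (6 + y) / (6 + 4 * y) - Real.log (1 + y))
        (((1 * (6 + y) + y * 1) * (6 + 4 * y) - y * (6 + y) * (4 * 1)) / (6 + 4 * y) ^ 2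
          - 1 / (1 + y)) y := by
    intro y hy
    have h1 : (0:ℝ) < 1 + y := by linarith
    have h2 : (0:ℝ) < 6 + 4 * y := by linarith
    have hnum : HasDerivAt (fun y : ℝ => y * (6 + y)) (1 * (6 + y) + y * 1) y :=
      (hasDerivAt_id y).mul ((hasDerivAt_id y).const_add 6)
    have hden : HasDerivAt (fun y : ℝ => 6 + 4 * y) (4 * 1) y :=
      ((hasDerivAt_id y).const_mul 4).const_add 6
    have hdiv := hnum.div hden h2.ne'
    have hlog : HasDerivAt (fun y : ℝ => Real.log (1 + y)) (1 / (1 + y)) y := by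
      have := ((hasDerivAt_id y).const_add 1).log h1.ne'
      simpa using this
    exact hdiv.sub hlog
  have mono : MonotoneOn (fun y : ℝ => y * (6 + y) / (6 + 4 * y) - Real.log (1 + y))
      (Set.Ici 0) := by
    apply monotoneOn_of_deriv_nonneg (convex_Ici 0)
    · intro y hy
      exact ((key y hy).continuousAt).continuousWithinAt
    · intro y hy
      rw [interior_Ici] at hy
      exact ((key y (le_of_lt hy)).hasDerivWithinAt).differentiableWithinAt
    · intro y hy
      rw [interior_Ici] at hy
      have hy0 : (0:ℝ) < y := hy
      rw [(key y hy0.le).deriv]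
      have h1 : (0:ℝ) < 1 + y := by linarith
      have h2 : (0:ℝ) < 6 + 4 * y := by linarith
      have heq : ((1 * (6 + y) + y * 1) * (6 + 4 * y) - y * (6 + y) * (4 * 1)) / (6 + 4 * y) ^ 2
          - 1 / (1 + y) = 4 * y ^ 3 / ((6 + 4 * y) ^ 2 * (1 + y)) := by
        field_simp
        ring
      rw [heq]
      positivity
  have h0 : (0:ℝ) ∈ Set.Ici (0:ℝ) := Set.mem_Ici.2 le_rfl
  have := mono h0 (Set.mem_Ici.2 hx) hx
  norm_num at this
  linarith

/-- Key monotonicity lemma: nonnegativity of `H`. -/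
lemma H_nonneg {c : ℝ} (hc2 : c ^ 2 = 2) (hc : 7/5 ≤ c) {t : ℝ} (ht : 1 ≤ t) :
    0 ≤ 3 * Real.log t + Real.log (t + c) - Real.log (c * t + 1)
      + (2 - 2 * t ^ 2) * (Real.log (t ^ 2 + 1) - 2 * Real.log t) := by
  set H : ℝ → ℝ := fun x => 3 * Real.log x + Real.log (x + c) - Real.log (c * x + 1)
      + (2 - 2 * x ^ 2) * (Real.log (x ^ 2 + 1) - 2 * Real.log x) with hH
  have hc0 : (0:ℝ) < c := by linarith
  have hder : ∀ x : ℝ, 0 < x → HasDerivAt H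
      (3 / x + 1 / (x + c) - c / (c * x + 1)
        + ((-(4 * x)) * (Real.log (x ^ 2 + 1) - 2 * Real.log x)
          + (2 - 2 * x ^ 2) * (2 * x / (x ^ 2 + 1) - 2 / x))) x := by
    intro x hx
    have hxc : 0 < x + c := by linarith
    have hcx : 0 < c * x + 1 := by positivity
    have hx2 : (0:ℝ) < x ^ 2 + 1 := by positivity
    have hA : HasDerivAt (fun y : ℝ => 3 * Real.log y) (3 * x⁻¹) x :=
      (Real.hasDerivAt_log hx.ne').const_mul 3
    have hB : HasDerivAt (fun y : ℝ => Real.log (y + c)) (1 / (x + c)) x := by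
      have := ((hasDerivAt_id x).add_const c).log hxc.ne'
      simpa using this
    have hC : HasDerivAt (fun y : ℝ => Real.log (c * y + 1)) (c / (c * x + 1)) x := by
      have := (((hasDerivAt_id x).const_mul c).add_const 1).log hcx.ne'
      simpa using this
    have hu : HasDerivAt (fun y : ℝ => 2 - 2 * y ^ 2) (-(2 * ((2:ℕ) * x ^ 1))) x :=
      ((hasDerivAt_pow 2 x).const_mul 2).const_sub 2
    have hv : HasDerivAt (fun y : ℝ => Real.log (y ^ 2 + 1) - 2 * Real.log y)
        ((2:ℕ) * x ^ 1 / (x ^ 2 + 1) - 2 * x⁻¹) x := by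
      have h1 := ((hasDerivAt_pow 2 x).add_const 1).log hx2.ne'
      have h2 := (Real.hasDerivAt_log hx.ne').const_mul (2:ℝ)
      exact h1.sub h2
    have hcomb := ((hA.add hB).sub hC).add (hu.mul hv)
    refine hcomb.congr_deriv ?_
    push_cast
    ring
  have mono : MonotoneOn H (Set.Ici 1) := by
    apply monotoneOn_of_deriv_nonneg (convex_Ici 1)
    · intro x hx
      have hx0 : (0:ℝ) < x := lt_of_lt_of_le one_pos hx
      exact ((hder x hx0).continuousAt).continuousWithinAt
    · intro x hx
      rw [interior_Ici] at hx
      have hx0 : (0:ℝ) < x := lt_trans one_pos hx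
      exact ((hder x hx0).hasDerivWithinAt).differentiableWithinAt
    · intro x hx
      rw [interior_Ici] at hx
      have hx1 : (1:ℝ) ≤ x := le_of_lt hx
      have hx0 : (0:ℝ) < x := lt_of_lt_of_le one_pos hx1
      rw [(hder x hx0).deriv]
      have hxc : 0 < x + c := by linarith
      have hcx : 0 < c * x + 1 := by positivity
      have hx2 : (0:ℝ) < x ^ 2 + 1 := by positivity
      have hDs : 0 < c * (x ^ 2 + 1) + 3 * x := by positivity
      -- rewrite log (x^2+1) - 2 log x
      have hlogeq : Real.log (x ^ 2 + 1) - 2 * Real.log x = Real.log (1 + 1 / x ^ 2) := by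
        rw [show (1:ℝ) + 1 / x ^ 2 = (x ^ 2 + 1) / x ^ 2 by
          rw [add_div, div_self (by positivity : (x:ℝ) ^ 2 ≠ 0)]]
        rw [Real.log_div hx2.ne' (by positivity : (x:ℝ) ^ 2 ≠ 0), Real.log_pow]
        push_cast
        ring
      have hple : Real.log (1 + 1 / x ^ 2) ≤ (6 * x ^ 2 + 1) / (x ^ 2 * (6 * x ^ 2 + 4)) := by
        refine (log_pade (by positivity : (0:ℝ) ≤ 1 / x ^ 2)).trans (le_of_eq ?_)
        field_simp
      have hlog_le : Real.log (x ^ 2 + 1) - 2 * Real.log x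
          ≤ (6 * x ^ 2 + 1) / (x ^ 2 * (6 * x ^ 2 + 4)) := by
        rw [hlogeq]; exact hple
      have hmul : (-(4 * x)) * ((6 * x ^ 2 + 1) / (x ^ 2 * (6 * x ^ 2 + 4)))
          ≤ (-(4 * x)) * (Real.log (x ^ 2 + 1) - 2 * Real.log x) :=
        mul_le_mul_of_nonpos_left hlog_le (by linarith)
      have hsplit : 1 / (x + c) - c / (c * x + 1) = -(1 / (c * (x ^ 2 + 1) + 3 * x)) := by
        have hDval : (x + c) * (c * x + 1) = c * (x ^ 2 + 1) + 3 * x := by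
          linear_combination x * hc2
        rw [div_sub_div _ _ hxc.ne' hcx.ne', hDval,
          show (1 * (c * x + 1) - (x + c) * c) = -1 by linear_combination -hc2]
        rw [neg_div]
      -- the key polynomial inequality
      have hs : (0:ℝ) ≤ x - 1 := by linarith
      have hpoly : (0:ℝ) ≤ 63 * x ^ 6 + 120 * x ^ 5 + 42 * x ^ 4 - 70 * x ^ 3
          - 49 * x ^ 2 - 70 * x - 28 := by
        nlinarith [pow_nonneg hs 6, pow_nonneg hs 5, pow_nonneg hs 4, pow_nonneg hs 3,
          sq_nonneg (x - 1), hs]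
      have h9 : (0:ℝ) ≤ 9 * x ^ 4 - 3 * x ^ 2 - 4 := by nlinarith [pow_nonneg hs 4, sq_nonneg (x-1), hs]
      have h75 : (7/5 : ℝ) * (x ^ 2 + 1) + 3 * x ≤ c * (x ^ 2 + 1) + 3 * x := by nlinarith [sq_nonneg x]
      have hkey : (0:ℝ) ≤ (9 * x ^ 4 - 3 * x ^ 2 - 4) * (c * (x ^ 2 + 1) + 3 * x)
          - x * (3 * x ^ 4 + 5 * x ^ 2 + 2) := by
        nlinarith [mul_le_mul_of_nonneg_left h75 h9, hpoly]
      have hEkey : (0:ℝ) ≤ 3 / x - 1 / (c * (x ^ 2 + 1) + 3 * x)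
          + (2 - 2 * x ^ 2) * (2 * x / (x ^ 2 + 1) - 2 / x)
          + (-(4 * x)) * ((6 * x ^ 2 + 1) / (x ^ 2 * (6 * x ^ 2 + 4))) := by
        have heq : 3 / x - 1 / (c * (x ^ 2 + 1) + 3 * x)
            + (2 - 2 * x ^ 2) * (2 * x / (x ^ 2 + 1) - 2 / x)
            + (-(4 * x)) * ((6 * x ^ 2 + 1) / (x ^ 2 * (6 * x ^ 2 + 4)))
            = ((9 * x ^ 4 - 3 * x ^ 2 - 4) * (c * (x ^ 2 + 1) + 3 * x)
                - x * (3 * x ^ 4 + 5 * x ^ 2 + 2))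
              / (x * (x ^ 2 + 1) * (3 * x ^ 2 + 2) * (c * (x ^ 2 + 1) + 3 * x)) := by
          field_simp
          ring
        rw [heq]
        exact div_nonneg hkey (by positivity)
      linarith [hmul, hEkey, hsplit]
  have h1mem : (1:ℝ) ∈ Set.Ici (1:ℝ) := Set.mem_Ici.2 le_rfl
  have hle := mono h1mem (Set.mem_Ici.2 ht) ht
  have hH1 : H 1 = 0 := by
    have hh : H 1 = 3 * Real.log 1 + Real.log (1 + c) - Real.log (c * 1 + 1)
        + (2 - 2 * 1 ^ 2) * (Real.log (1 ^ 2 + 1) - 2 * Real.log 1) := rfl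
    rw [hh, Real.log_one, mul_one]
    norm_num [add_comm]
  rw [hH1] at hle
  exact hle

theorem Phi_ge_one (q : ℝ) (hq : 1 ≤ q) :
    1 ≤ Real.sqrt ((1 + Real.sqrt (2 / q)) / (1 + Real.sqrt (2 * q))) * q *
      (1 + 1 / q) ^ (1 - q) := by
  have hq0 : (0:ℝ) < q := lt_of_lt_of_le one_pos hq
  set c : ℝ := Real.sqrt 2 with hcdef
  set t : ℝ := Real.sqrt q with htdef
  have hc2 : c ^ 2 = 2 := Real.sq_sqrt (by norm_num)
  have hc75 : (7/5 : ℝ) ≤ c := by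
    rw [hcdef, show (7/5:ℝ) = Real.sqrt ((7/5)^2) by rw [Real.sqrt_sq (by norm_num)]]
    apply Real.sqrt_le_sqrt
    norm_num
  have ht2 : t ^ 2 = q := Real.sq_sqrt hq0.le
  have ht0 : 0 < t := Real.sqrt_pos.mpr hq0
  have ht1 : (1:ℝ) ≤ t := by
    rw [htdef, show (1:ℝ) = Real.sqrt 1 by rw [Real.sqrt_one]]
    exact Real.sqrt_le_sqrt hq
  have hsqrt2q : Real.sqrt (2 * q) = c * t := Real.sqrt_mul (by norm_num) q
  have hsqrt2dq : Real.sqrt (2 / q) = c / t := Real.sqrt_div (by norm_num) q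
  have hApos : 0 < (1 + Real.sqrt (2 / q)) / (1 + Real.sqrt (2 * q)) := by
    apply div_pos <;> positivity
  have hsA : 0 < Real.sqrt ((1 + Real.sqrt (2 / q)) / (1 + Real.sqrt (2 * q))) :=
    Real.sqrt_pos.mpr hApos
  have hbase : (0:ℝ) < 1 + 1 / q := by positivity
  have hrpow : 0 < (1 + 1 / q) ^ (1 - q) := Real.rpow_pos_of_pos hbase _
  have hRHS : 0 < Real.sqrt ((1 + Real.sqrt (2 / q)) / (1 + Real.sqrt (2 * q))) * q *
      (1 + 1 / q) ^ (1 - q) := mul_pos (mul_pos hsA hq0) hrpow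
  refine (Real.log_nonneg_iff hRHS).mp ?_
  rw [Real.log_mul (mul_pos hsA hq0).ne' hrpow.ne', Real.log_mul hsA.ne' hq0.ne',
    Real.log_sqrt hApos.le,
    Real.log_div (by positivity : (1:ℝ) + Real.sqrt (2 / q) ≠ 0)
      (by positivity : (1:ℝ) + Real.sqrt (2 * q) ≠ 0),
    Real.log_rpow hbase]
  have e1 : Real.log (1 + Real.sqrt (2 / q)) = Real.log (t + c) - Real.log t := by
    rw [hsqrt2dq, show (1:ℝ) + c / t = (t + c) / t by
        rw [add_div, div_self ht0.ne'],
      Real.log_div (by positivity) ht0.ne']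
  have e2 : Real.log (1 + Real.sqrt (2 * q)) = Real.log (c * t + 1) := by
    rw [hsqrt2q, add_comm]
  have e3 : Real.log q = 2 * Real.log t := by
    rw [← ht2, Real.log_pow]
    push_cast
    ring
  have e4 : Real.log (1 + 1 / q) = Real.log (t ^ 2 + 1) - 2 * Real.log t := by
    rw [← ht2, show (1:ℝ) + 1 / t ^ 2 = (t ^ 2 + 1) / t ^ 2 by
        rw [add_div, div_self (by positivity : (t:ℝ) ^ 2 ≠ 0)],
      Real.log_div (by positivity : (t:ℝ) ^ 2 + 1 ≠ 0) (by positivity : (t:ℝ) ^ 2 ≠ 0),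
      Real.log_pow]
    push_cast
    ring
  rw [e1, e2, e3, e4, ← ht2]
  have hmain := H_nonneg hc2 hc75 ht1
  have hexp : (Real.log (t + c) - Real.log t - Real.log (c * t + 1)) / 2 + 2 * Real.log t
      + (1 - t ^ 2) * (Real.log (t ^ 2 + 1) - 2 * Real.log t)
      = (3 * Real.log t + Real.log (t + c) - Real.log (c * t + 1)
        + (2 - 2 * t ^ 2) * (Real.log (t ^ 2 + 1) - 2 * Real.log t)) / 2 := by ring
  linarith [hmain, hexp]
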